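/- (Existence and uniqueness of the Steinberg Iwahori-spherical Whittaker function) There exists a unique function W : G → ℂ such that for all u ∈ N, d ∈ T, σ ∈ S_n and j ∈ J: W(u·d·w_σ·j) = ψ(u)·(χδ_B)(d)·(-p)^{-ℓ(σ)} whenever λ(d) is σ-dominant, and W(u·d·w_σ·j) = 0 whenever λ(d) is not σ-dominant. (In particular, this formula is well defined: it is independent of the chosen Bruhat–Iwahori factorization g = u·d·w_σ·j.) -/

import Mathlib

open Matrix MeasureTheory Pointwise

variable (p n : ℕ) [Fact p.Prime]

/-- The `(i,j)` entry of an element of `GL n ℚ_[p]`. -/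
def entry (g : GL (Fin n) ℚ_[p]) (i j : Fin n) : ℚ_[p] :=
  (g : Matrix (Fin n) (Fin n) ℚ_[p]) i j

/-- The Iwahori subgroup `J`, as a subset of `GL n ℚ_[p]`: matrices of `GL_n(ℤ_p)`
(integral matrix with integral inverse) whose entries strictly below the diagonal
lie in `pℤ_p` (i.e. have norm `< 1`). -/
def Jset : Set (GL (Fin n) ℚ_[p]) :=
  {g | (∀ i j, ‖entry p n g i j‖ ≤ 1) ∧ (∀ i j, ‖entry p n g⁻¹ i j‖ ≤ 1) ∧
       ∀ i j : Fin n, j < i → ‖entry p n g i j‖ < 1}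

/-- The diagonal torus `T`. -/
def Tset : Set (GL (Fin n) ℚ_[p]) :=
  {g | ∀ i j : Fin n, i ≠ j → entry p n g i j = 0}

/-- The group `N` of upper unitriangular matrices. -/
def Nset : Set (GL (Fin n) ℚ_[p]) :=
  {g | (∀ i : Fin n, entry p n g i i = 1) ∧ ∀ i j : Fin n, j < i → entry p n g i j = 0}

/-- The upper triangular Borel subgroup `B`. -/
def Bset : Set (GL (Fin n) ℚ_[p]) :=
  {g | ∀ i j : Fin n, j < i → entry p n g i j = 0}

/-- Permutation matrix `w_σ` of `σ` as an element of `GL n ℚ_[p]`, in the convention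
`w_σ · e_j = e_{σ(j)}` (entries `(w_σ)_{ij} = δ_{i, σ(j)}`). -/
noncomputable def permGL (σ : Equiv.Perm (Fin n)) : GL (Fin n) ℚ_[p] :=
  Matrix.GeneralLinearGroup.mkOfDetNeZero ((σ.permMatrix ℚ_[p])ᵀ) (by
    rw [Matrix.det_transpose, Matrix.det_permutation]
    exact_mod_cast Int.cast_ne_zero.mpr (Equiv.Perm.sign σ).ne_zero)

/-- The elementary matrix `I + t·E_{ij}` as an element of `GL n ℚ_[p]`. -/
noncomputable def elemGL (i j : Fin n) (hij : i ≠ j) (t : ℚ_[p]) : GL (Fin n) ℚ_[p] :=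
  Matrix.GeneralLinearGroup.mkOfDetNeZero (Matrix.transvection i j t) (by
    rw [Matrix.det_transvection_of_ne i j hij]
    exact one_ne_zero)

/-- The set of inversions `Inv(σ) = {(i,j) : i < j, σ⁻¹ i > σ⁻¹ j}`. -/
def InvSet (σ : Equiv.Perm (Fin n)) : Finset (Fin n × Fin n) :=
  Finset.univ.filter fun ij => ij.1 < ij.2 ∧ σ⁻¹ ij.2 < σ⁻¹ ij.1

/-- The length `ℓ(σ)` (number of inversions) of `σ`. -/
def len (σ : Equiv.Perm (Fin n)) : ℕ := (InvSet n σ).card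

/-- `i+1` as an element of `Fin n`. -/
def finSucc (i : Fin n) (h : (i : ℕ) + 1 < n) : Fin n := ⟨(i : ℕ) + 1, h⟩

theorem finSucc_ne (i : Fin n) (h : (i : ℕ) + 1 < n) : i ≠ finSucc n i h := by
  simp [finSucc, Fin.ext_iff]

/-- The value of `χδ_B` at `b`, defined through the diagonal entries of `b`:
`(χδ_B)(b) = ∏_{i=1}^n z_i^{v(b_i)} p^{-(n+1-2i) v(b_i)}`. -/
noncomputable def chiDelta (z : Fin n → ℂˣ) (d : GL (Fin n) ℚ_[p]) : ℂ :=
  ∏ i : Fin n, ((z i : ℂ) ^ (entry p n d i i).valuation *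
    (p : ℂ) ^ (-(((n : ℤ) + 1) - 2 * ((i : ℕ) + 1 : ℤ)) * (entry p n d i i).valuation))

/-- The character `ψ(u) = ∏_{i=1}^{n-1} ψ₀(u_{i,i+1})` of `N`, built from an additive
character `ψ₀` of `ℚ_p`. -/
noncomputable def psiN (ψ₀ : ℚ_[p] → ℂ) (u : GL (Fin n) ℚ_[p]) : ℂ :=
  ∏ i : Fin n, if h : (i : ℕ) + 1 < n then ψ₀ (entry p n u i (finSucc n i h)) else 1

/-- `λ(d)` is `σ`-dominant: for all adjacent indices,
`v(d_i) - v(d_{i+1}) ≥ 0` if `σ⁻¹ i < σ⁻¹(i+1)`, and `≥ -1` if `σ⁻¹ i > σ⁻¹(i+1)`. -/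
def IsDom (σ : Equiv.Perm (Fin n)) (d : GL (Fin n) ℚ_[p]) : Prop :=
  ∀ (i : Fin n) (h : (i : ℕ) + 1 < n),
    (σ⁻¹ i < σ⁻¹ (finSucc n i h) →
      0 ≤ (entry p n d i i).valuation
            - (entry p n d (finSucc n i h) (finSucc n i h)).valuation) ∧
    (σ⁻¹ (finSucc n i h) < σ⁻¹ i →
      -1 ≤ (entry p n d i i).valuation
            - (entry p n d (finSucc n i h) (finSucc n i h)).valuation)

/-- The dominant part `T⁺` of the diagonal torus: `v(d_1) ≥ … ≥ v(d_n)`. -/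
def Tplus : Set (GL (Fin n) ℚ_[p]) :=
  {d | d ∈ Tset p n ∧ Antitone fun i : Fin n => (entry p n d i i).valuation}

/-- The double coset `J g J`. -/
def dcos (g : GL (Fin n) ℚ_[p]) : Set (GL (Fin n) ℚ_[p]) :=
  {x | ∃ a ∈ Jset p n, ∃ b ∈ Jset p n, x = a * g * b}

namespace SW

variable {p n : ℕ} [Fact p.Prime]

local notation "GLn" => GL (Fin n) ℚ_[p]

lemma entry_mul (a b : GLn) (i j : Fin n) :
    entry p n (a * b) i j = ∑ k, entry p n a i k * entry p n b k j := by
  simp [entry, Units.val_mul, Matrix.mul_apply]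

lemma entry_one (i j : Fin n) : entry p n (1 : GLn) i j = if i = j then 1 else 0 := by
  simp [entry, Matrix.one_apply]

lemma norm_lt_one_iff_le_inv (x : ℚ_[p]) : ‖x‖ < 1 ↔ ‖x‖ ≤ (p : ℝ)⁻¹ := by
  have := Padic.norm_lt_pow_iff_norm_le_pow_sub_one x 0
  simpa using this

lemma norm_sum_le_of_le {s : Finset (Fin n)} {f : Fin n → ℚ_[p]} {C : ℝ}
    (hC : 0 ≤ C) (h : ∀ i ∈ s, ‖f i‖ ≤ C) : ‖∑ i ∈ s, f i‖ ≤ C :=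
  IsUltrametricDist.norm_sum_le_of_forall_le_of_nonneg hC h

lemma det_ne_zero (g : GLn) : Matrix.det (g : Matrix (Fin n) (Fin n) ℚ_[p]) ≠ 0 := by
  have h : IsUnit (g : Matrix (Fin n) (Fin n) ℚ_[p]) := ⟨g, rfl⟩
  exact ((Matrix.isUnit_iff_isUnit_det _).mp h).ne_zero

lemma row_ne_zero (g : GLn) (i : Fin n) : ∃ c, entry p n g i c ≠ 0 := by
  by_contra h
  push_neg at h
  exact det_ne_zero g (Matrix.det_eq_zero_of_row_eq_zero i h)

end SW
namespace SW
variable {p n : ℕ} [Fact p.Prime]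
local notation "GLn" => GL (Fin n) ℚ_[p]

lemma entry_permGL (σ : Equiv.Perm (Fin n)) (i j : Fin n) :
    entry p n (permGL p n σ) i j = if i = σ j then 1 else 0 := by
  simp [permGL, Matrix.GeneralLinearGroup.mkOfDetNeZero, Matrix.GeneralLinearGroup.mk',
    Matrix.unitOfDetInvertible, entry, Matrix.transpose_apply, Equiv.Perm.permMatrix,
    Equiv.toPEquiv, PEquiv.toMatrix, eq_comm, unitOfInvertible]

lemma entry_mul_permGL (a : GLn) (σ : Equiv.Perm (Fin n)) (i j : Fin n) :
    entry p n (a * permGL p n σ) i j = entry p n a i (σ j) := by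
  rw [entry_mul]
  rw [Finset.sum_eq_single (σ j)]
  · simp [entry_permGL]
  · intro k _ hk; simp [entry_permGL, hk]
  · simp

lemma entry_permGL_mul (a : GLn) (σ : Equiv.Perm (Fin n)) (i j : Fin n) :
    entry p n (permGL p n σ * a) i j = entry p n a (σ⁻¹ i) j := by
  rw [entry_mul]
  rw [Finset.sum_eq_single (σ⁻¹ i)]
  · simp [entry_permGL]
  · intro k _ hk
    have : i ≠ σ k := by
      intro hc; exact hk (by simp [hc])
    simp [entry_permGL, this]
  · simp

lemma permGL_inv (σ : Equiv.Perm (Fin n)) : (permGL p n σ)⁻¹ = permGL p n σ⁻¹ := by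
  apply inv_eq_of_mul_eq_one_right
  apply Matrix.GeneralLinearGroup.ext
  intro i j
  have : entry p n (permGL p n σ * permGL p n σ⁻¹) i j = entry p n (1 : GLn) i j := by
    rw [entry_permGL_mul, entry_permGL, entry_one]
    by_cases h : i = j <;> simp [h, Equiv.symm_apply_apply, eq_comm]
  exact this

end SW
namespace SW
variable {p n : ℕ} [Fact p.Prime]
local notation "GLn" => GL (Fin n) ℚ_[p]

lemma norm_det_le_one (A : Matrix (Fin n) (Fin n) ℚ_[p]) (h : ∀ i j, ‖A i j‖ ≤ 1) :
    ‖A.det‖ ≤ 1 := by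
  rw [Matrix.det_apply]
  apply IsUltrametricDist.norm_sum_le_of_forall_le_of_nonneg zero_le_one
  intro σ _
  rcases Int.units_eq_one_or (Equiv.Perm.sign σ) with hs | hs <;>
    rw [hs] <;> simp only [one_smul, Units.neg_smul, norm_neg] <;>
  · rw [norm_prod]
    exact Finset.prod_le_one (fun i _ => norm_nonneg _) (fun i _ => h _ _)

/-- For `C` in `K` (both `C` and `C⁻¹` integral) upper triangular, diagonal entries are units. -/
lemma diag_norm_one (C : GLn) (h1 : ∀ i j, ‖entry p n C i j‖ ≤ 1)
    (h2 : ∀ i j, ‖entry p n C⁻¹ i j‖ ≤ 1)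
    (hut : ∀ i j : Fin n, j < i → entry p n C i j = 0) (i : Fin n) :
    ‖entry p n C i i‖ = 1 := by
  have hdet : ‖Matrix.det (C : Matrix (Fin n) (Fin n) ℚ_[p])‖ = 1 := by
    have hmul : Matrix.det (C : Matrix (Fin n) (Fin n) ℚ_[p]) *
        Matrix.det ((C⁻¹ : GLn) : Matrix (Fin n) (Fin n) ℚ_[p]) = 1 := by
      rw [← Matrix.det_mul, ← Units.val_mul, mul_inv_cancel]
      simp
    have h1' := norm_det_le_one (C : Matrix (Fin n) (Fin n) ℚ_[p]) h1
    have h2' := norm_det_le_one ((C⁻¹ : GLn) : Matrix (Fin n) (Fin n) ℚ_[p]) h2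
    have := congrArg (‖·‖) hmul
    simp only [norm_mul, norm_one] at this
    nlinarith [norm_nonneg (Matrix.det (C : Matrix (Fin n) (Fin n) ℚ_[p])),
      norm_nonneg (Matrix.det ((C⁻¹ : GLn) : Matrix (Fin n) (Fin n) ℚ_[p]))]
  have hprod : Matrix.det (C : Matrix (Fin n) (Fin n) ℚ_[p]) = ∏ k, entry p n C k k := by
    apply Matrix.det_of_upperTriangular
    intro a b hb
    exact hut a b hb
  rw [hprod] at hdet
  rw [norm_prod] at hdet
  by_contra hne
  have hlt : ‖entry p n C i i‖ < 1 := lt_of_le_of_ne (h1 i i) hne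
  have : ∏ k, ‖entry p n C k k‖ < 1 := by
    calc ∏ k, ‖entry p n C k k‖ ≤ ‖entry p n C i i‖ := by
          rw [← Finset.prod_erase_mul _ _ (Finset.mem_univ i)]
          apply mul_le_of_le_one_left (norm_nonneg _)
          exact Finset.prod_le_one (fun k _ => norm_nonneg _) (fun k _ => h1 k k)
      _ < 1 := hlt
  rw [hdet] at this
  exact lt_irrefl _ this
end SW
namespace SW
variable {p n : ℕ} [Fact p.Prime]
local notation "GLn" => GL (Fin n) ℚ_[p]

lemma one_mem_J : (1 : GLn) ∈ Jset p n := by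
  refine ⟨fun i j => ?_, fun i j => ?_, fun i j hij => ?_⟩
  · rw [entry_one]; split <;> simp
  · rw [inv_one, entry_one]; split <;> simp
  · rw [entry_one, if_neg (by exact fun h => absurd h (by simp [Fin.ext_iff]; omega))]
    simp

lemma entry_norm_le_one_mul {a b : GLn} (ha : ∀ i j, ‖entry p n a i j‖ ≤ 1)
    (hb : ∀ i j, ‖entry p n b i j‖ ≤ 1) (i j : Fin n) : ‖entry p n (a * b) i j‖ ≤ 1 := by
  rw [entry_mul]
  apply norm_sum_le_of_le zero_le_one
  intro k _
  rw [norm_mul]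
  exact mul_le_one₀ (ha i k) (norm_nonneg _) (hb k j)

lemma mul_mem_J {a b : GLn} (ha : a ∈ Jset p n) (hb : b ∈ Jset p n) : a * b ∈ Jset p n := by
  obtain ⟨ha1, ha2, ha3⟩ := ha
  obtain ⟨hb1, hb2, hb3⟩ := hb
  refine ⟨entry_norm_le_one_mul ha1 hb1, ?_, ?_⟩
  · rw [_root_.mul_inv_rev]
    exact entry_norm_le_one_mul hb2 ha2
  · intro i j hij
    rw [norm_lt_one_iff_le_inv, entry_mul]
    apply norm_sum_le_of_le (by positivity)
    intro k _
    rw [norm_mul]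
    rcases lt_or_ge k i with hk | hk
    · calc ‖entry p n a i k‖ * ‖entry p n b k j‖ ≤ (p : ℝ)⁻¹ * 1 := by
            apply mul_le_mul ((norm_lt_one_iff_le_inv _).mp (ha3 i k hk)) (hb1 k j)
              (norm_nonneg _) (by positivity)
        _ = (p : ℝ)⁻¹ := mul_one _
    · have hjk : j < k := lt_of_lt_of_le hij hk
      calc ‖entry p n a i k‖ * ‖entry p n b k j‖ ≤ 1 * (p : ℝ)⁻¹ := by
            apply mul_le_mul (ha1 i k) ((norm_lt_one_iff_le_inv _).mp (hb3 k j hjk))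
              (norm_nonneg _) zero_le_one
        _ = (p : ℝ)⁻¹ := one_mul _

/-- Lift of an integral matrix to `ℤ_p`. -/
def liftM (A : Matrix (Fin n) (Fin n) ℚ_[p]) (h : ∀ i j, ‖A i j‖ ≤ 1) :
    Matrix (Fin n) (Fin n) ℤ_[p] :=
  Matrix.of fun i j => (⟨A i j, h i j⟩ : ℤ_[p])

/-- mod-p reduction of an integral `ℚ_p` matrix. -/
noncomputable def red (A : Matrix (Fin n) (Fin n) ℚ_[p]) (h : ∀ i j, ‖A i j‖ ≤ 1) :
    Matrix (Fin n) (Fin n) (ZMod p) :=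
  (PadicInt.toZMod (p := p)).mapMatrix (liftM A h)

lemma red_entry_eq_zero_iff (A : Matrix (Fin n) (Fin n) ℚ_[p]) (h : ∀ i j, ‖A i j‖ ≤ 1)
    (i j : Fin n) : red A h i j = 0 ↔ ‖A i j‖ < 1 := by
  have h1 : red A h i j = 0 ↔ liftM A h i j ∈ RingHom.ker (PadicInt.toZMod (p := p)) := by
    rw [RingHom.mem_ker]
    rfl
  rw [h1, PadicInt.ker_toZMod, IsLocalRing.mem_maximalIdeal, mem_nonunits_iff,
    PadicInt.isUnit_iff]
  have h2 : ‖liftM A h i j‖ = ‖A i j‖ := rfl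
  rw [h2]
  constructor
  · intro hx
    exact lt_of_le_of_ne (h i j) hx
  · exact ne_of_lt

lemma liftM_mul (A B : Matrix (Fin n) (Fin n) ℚ_[p]) (hA : ∀ i j, ‖A i j‖ ≤ 1)
    (hB : ∀ i j, ‖B i j‖ ≤ 1) (hAB : ∀ i j, ‖(A * B) i j‖ ≤ 1) :
    liftM (A * B) hAB = liftM A hA * liftM B hB := by
  ext i j
  apply Subtype.ext
  show (A * B) i j = ((liftM A hA * liftM B hB) i j : ℚ_[p])
  have h2 : (liftM A hA * liftM B hB) i j = ∑ k, liftM A hA i k * liftM B hB k j :=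
    Matrix.mul_apply
  rw [h2, show ((∑ k, liftM A hA i k * liftM B hB k j : ℤ_[p]) : ℚ_[p])
      = PadicInt.Coe.ringHom (∑ k, liftM A hA i k * liftM B hB k j) from rfl, map_sum,
    Matrix.mul_apply]
  apply Finset.sum_congr rfl
  intro k _
  rw [_root_.map_mul]
  rfl

lemma liftM_one (h : ∀ i j, ‖(1 : Matrix (Fin n) (Fin n) ℚ_[p]) i j‖ ≤ 1) :
    liftM 1 h = 1 := by
  ext i j
  apply Subtype.ext
  show (1 : Matrix (Fin n) (Fin n) ℚ_[p]) i j = (((1 : Matrix (Fin n) (Fin n) ℤ_[p]) i j : ℤ_[p]) : ℚ_[p])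
  by_cases hij : i = j <;> simp [hij, Matrix.one_apply]

lemma red_mul (A B : Matrix (Fin n) (Fin n) ℚ_[p]) (hA : ∀ i j, ‖A i j‖ ≤ 1)
    (hB : ∀ i j, ‖B i j‖ ≤ 1) (hAB : ∀ i j, ‖(A * B) i j‖ ≤ 1) :
    red (A * B) hAB = red A hA * red B hB := by
  rw [red, liftM_mul A B hA hB hAB, _root_.map_mul]
  rfl

lemma red_one (h : ∀ i j, ‖(1 : Matrix (Fin n) (Fin n) ℚ_[p]) i j‖ ≤ 1) :
    red 1 h = 1 := by
  rw [red, liftM_one, _root_.map_one]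

end SW
namespace SW
variable {p n : ℕ} [Fact p.Prime]
local notation "GLn" => GL (Fin n) ℚ_[p]

lemma red_congr {A A' : Matrix (Fin n) (Fin n) ℚ_[p]} (hAA : A = A')
    (h : ∀ i j, ‖A i j‖ ≤ 1) (h' : ∀ i j, ‖A' i j‖ ≤ 1) : red A h = red A' h' := by
  subst hAA; rfl

lemma one_entry_le (i j : Fin n) : ‖(1 : Matrix (Fin n) (Fin n) ℚ_[p]) i j‖ ≤ 1 := by
  rw [Matrix.one_apply]; split <;> simp

lemma inv_mem_J {g : GLn} (hg : g ∈ Jset p n) : g⁻¹ ∈ Jset p n := by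
  obtain ⟨h1, h2, h3⟩ := hg
  refine ⟨h2, by rw [inv_inv]; exact h1, ?_⟩
  set A : Matrix (Fin n) (Fin n) ℚ_[p] := (g : Matrix (Fin n) (Fin n) ℚ_[p]) with hA
  set B : Matrix (Fin n) (Fin n) ℚ_[p] := ((g⁻¹ : GLn) : Matrix (Fin n) (Fin n) ℚ_[p]) with hB
  have hAB : A * B = 1 := by rw [hA, hB, ← Units.val_mul, mul_inv_cancel, Units.val_one]
  have hBA : B * A = 1 := by rw [hA, hB, ← Units.val_mul, inv_mul_cancel, Units.val_one]
  have hABle : ∀ i j, ‖(A * B) i j‖ ≤ 1 := by rw [hAB]; exact one_entry_le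
  have hBAle : ∀ i j, ‖(B * A) i j‖ ≤ 1 := by rw [hBA]; exact one_entry_le
  have key : red A h1 * red B h2 = 1 := by
    rw [← red_mul A B h1 h2 hABle, red_congr hAB hABle one_entry_le, red_one]
  have keyBA : red B h2 * red A h1 = 1 := by
    rw [← red_mul B A h2 h1 hBAle, red_congr hBA hBAle one_entry_le, red_one]
  haveI : Invertible (red A h1) := invertibleOfRightInverse _ _ key
  have htri : (red A h1).BlockTriangular id := by
    intro a b hb
    exact (red_entry_eq_zero_iff A h1 a b).mpr (h3 a b hb)
  have htri' : (red A h1)⁻¹.BlockTriangular id :=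
    Matrix.blockTriangular_inv_of_blockTriangular htri
  have hBinv : (red A h1)⁻¹ = red B h2 := Matrix.inv_eq_right_inv key
  intro i j hij
  rw [show (entry p n g⁻¹ i j) = B i j from rfl, ← red_entry_eq_zero_iff B h2, ← hBinv]
  exact htri' hij

lemma binv_upper {b : GLn} (hb : ∀ i j : Fin n, j < i → entry p n b i j = 0) :
    ∀ i j : Fin n, j < i → entry p n b⁻¹ i j = 0 := by
  have htri : ((b : Matrix (Fin n) (Fin n) ℚ_[p])).BlockTriangular id := fun i j h => hb i j h
  haveI : Invertible (b : Matrix (Fin n) (Fin n) ℚ_[p]) := b.invertible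
  have htri' := Matrix.blockTriangular_inv_of_blockTriangular htri
  intro i j hij
  have : ((b⁻¹ : GLn) : Matrix (Fin n) (Fin n) ℚ_[p]) = (b : Matrix (Fin n) (Fin n) ℚ_[p])⁻¹ :=
    Matrix.coe_units_inv b
  show ((b⁻¹ : GLn) : Matrix (Fin n) (Fin n) ℚ_[p]) i j = 0
  rw [this]
  exact htri' hij

lemma binv_diag {b : GLn} (hb : ∀ i j : Fin n, j < i → entry p n b i j = 0) (i : Fin n) :
    entry p n b⁻¹ i i * entry p n b i i = 1 := by
  have h1 : entry p n (b⁻¹ * b) i i = 1 := by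
    rw [inv_mul_cancel, entry_one, if_pos rfl]
  rw [entry_mul] at h1
  rw [Finset.sum_eq_single i] at h1
  · exact h1
  · intro k _ hk
    rcases lt_or_gt_of_ne hk with h | h
    · rw [binv_upper hb i k h, zero_mul]
    · rw [hb k i h, mul_zero]
  · simp

lemma mul_upper {a b : GLn} (ha : ∀ i j : Fin n, j < i → entry p n a i j = 0)
    (hb : ∀ i j : Fin n, j < i → entry p n b i j = 0) :
    ∀ i j : Fin n, j < i → entry p n (a * b) i j = 0 := by
  intro i j hij
  rw [entry_mul]
  apply Finset.sum_eq_zero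
  intro k _
  rcases lt_or_ge k i with hk | hk
  · rw [ha i k hk, zero_mul]
  · rw [hb k j (lt_of_lt_of_le hij hk), mul_zero]

lemma T_diag_ne_zero {d : GLn} (hd : d ∈ Tset p n) (i : Fin n) : entry p n d i i ≠ 0 := by
  obtain ⟨c, hc⟩ := row_ne_zero d i
  by_cases h : c = i
  · rwa [h] at hc
  · exact absurd (hd i c (fun hh => h hh.symm)) hc

lemma entry_mul_T {u d : GLn} (hd : d ∈ Tset p n) (i j : Fin n) :
    entry p n (u * d) i j = entry p n u i j * entry p n d j j := by
  rw [entry_mul, Finset.sum_eq_single j]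
  · intro k _ hk
    rw [hd k j hk, mul_zero]
  · simp

lemma one_mem_N : (1 : GLn) ∈ Nset p n := by
  constructor
  · intro i; rw [entry_one, if_pos rfl]
  · intro i j hij
    rw [entry_one, if_neg]
    intro h; rw [h] at hij; exact lt_irrefl _ hij

lemma mul_mem_N {a b : GLn} (ha : a ∈ Nset p n) (hb : b ∈ Nset p n) : a * b ∈ Nset p n := by
  constructor
  · intro i
    rw [entry_mul, Finset.sum_eq_single i]
    · rw [ha.1, hb.1, one_mul]
    · intro k _ hk
      rcases lt_or_gt_of_ne hk with h | h
      · rw [ha.2 i k h, zero_mul]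
      · rw [hb.2 k i h, mul_zero]
    · simp
  · exact mul_upper ha.2 hb.2

lemma inv_mem_N {u : GLn} (hu : u ∈ Nset p n) : u⁻¹ ∈ Nset p n := by
  constructor
  · intro i
    have := binv_diag hu.2 i
    rw [hu.1 i, mul_one] at this
    exact this
  · exact binv_upper hu.2

end SW
namespace SW
variable {p n : ℕ} [Fact p.Prime]
local notation "GLn" => GL (Fin n) ℚ_[p]

lemma hp_one_lt : (1 : ℝ) < (p : ℝ) := by
  exact_mod_cast (Fact.out : p.Prime).one_lt

lemma hp_pos : (0 : ℝ) < (p : ℝ) := lt_trans zero_lt_one hp_one_lt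

lemma val_zero_of_norm_one {x : ℚ_[p]} (h : ‖x‖ = 1) : x.valuation = 0 := by
  have hx : x ≠ 0 := by
    intro h0
    rw [h0, norm_zero] at h
    exact zero_ne_one h
  have h2 := Padic.norm_eq_zpow_neg_valuation hx
  rw [h] at h2
  have h3 : (p : ℝ) ^ (-x.valuation) = (p : ℝ) ^ (0 : ℤ) := by
    rw [zpow_zero]; exact h2.symm
  have h4 := zpow_right_injective₀ (hp_pos (p := p)) (ne_of_gt (hp_one_lt (p := p))) h3
  omega

lemma norm_le_of_val_le {x y : ℚ_[p]} (hx : x ≠ 0) (hy : y ≠ 0)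
    (h : y.valuation ≤ x.valuation) : ‖x‖ ≤ ‖y‖ := by
  rw [Padic.norm_eq_zpow_neg_valuation hx, Padic.norm_eq_zpow_neg_valuation hy]
  exact zpow_le_zpow_right₀ (le_of_lt (hp_one_lt (p := p))) (by omega)

lemma norm_le_p_mul_of_val {x y : ℚ_[p]} (hx : x ≠ 0) (hy : y ≠ 0)
    (h : (-1 : ℤ) ≤ x.valuation - y.valuation) : ‖x‖ ≤ (p : ℝ) * ‖y‖ := by
  rw [Padic.norm_eq_zpow_neg_valuation hx, Padic.norm_eq_zpow_neg_valuation hy]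
  have h1 : (p : ℝ) * (p : ℝ) ^ (-y.valuation) = (p : ℝ) ^ (1 - y.valuation) := by
    rw [sub_eq_add_neg, zpow_add₀ (ne_of_gt (hp_pos (p := p))), zpow_one]
  rw [h1]
  exact zpow_le_zpow_right₀ (le_of_lt (hp_one_lt (p := p))) (by omega)

end SW
namespace SW
variable {p n : ℕ} [Fact p.Prime]
local notation "GLn" => GL (Fin n) ℚ_[p]

lemma key {u u' d d' j j' : GLn} {σ τ : Equiv.Perm (Fin n)}
    (hu : u ∈ Nset p n) (hu' : u' ∈ Nset p n) (hd : d ∈ Tset p n) (hd' : d' ∈ Tset p n)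
    (hj : j ∈ Jset p n) (hj' : j' ∈ Jset p n)
    (heq : u * d * permGL p n σ * j = u' * d' * permGL p n τ * j') :
    σ = τ ∧ (∀ i, (entry p n d i i).valuation = (entry p n d' i i).valuation) ∧
    ∀ (ψ₀ : ℚ_[p] → ℂ), (∀ x y, ψ₀ (x + y) = ψ₀ x * ψ₀ y) → (∀ x, ‖x‖ ≤ 1 → ψ₀ x = 1) →
      IsDom p n σ d → psiN p n ψ₀ u = psiN p n ψ₀ u' := by
  classical
  set k : GLn := j' * j⁻¹ with hk_def
  have hk : k ∈ Jset p n := mul_mem_J hj' (inv_mem_J hj)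
  set C : GLn := permGL p n τ * k * (permGL p n σ)⁻¹ with hC_def
  have hb : u * d = u' * d' * C := by
    rw [hC_def, hk_def]
    have h1 : u * d = u * d * permGL p n σ * j * (j⁻¹ * (permGL p n σ)⁻¹) := by group
    rw [h1, heq]
    group
  have hCk : ∀ i l, entry p n C i l = entry p n k (τ⁻¹ i) (σ⁻¹ l) := by
    intro i l
    rw [hC_def, permGL_inv, mul_assoc, entry_permGL_mul, entry_mul_permGL]
  have hCint : ∀ i l, ‖entry p n C i l‖ ≤ 1 := fun i l => by rw [hCk]; exact hk.1 _ _
  have hCinv : C⁻¹ = permGL p n σ * k⁻¹ * (permGL p n τ)⁻¹ := by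
    rw [hC_def]
    simp only [_root_.mul_inv_rev, inv_inv]
    group
  have hkinv : k⁻¹ ∈ Jset p n := inv_mem_J hk
  have hCinvint : ∀ i l, ‖entry p n C⁻¹ i l‖ ≤ 1 := by
    intro i l
    rw [hCinv, permGL_inv, mul_assoc, entry_permGL_mul, entry_mul_permGL]
    exact hkinv.1 _ _
  -- upper triangularity of C
  have hdu : ∀ i l : Fin n, l < i → entry p n d i l = 0 := fun i l h => hd i l (ne_of_gt h)
  have hdu' : ∀ i l : Fin n, l < i → entry p n d' i l = 0 := fun i l h => hd' i l (ne_of_gt h)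
  have hbu : ∀ i l : Fin n, l < i → entry p n (u * d) i l = 0 := mul_upper hu.2 hdu
  have hbu' : ∀ i l : Fin n, l < i → entry p n (u' * d') i l = 0 := mul_upper hu'.2 hdu'
  have hCeq : C = (u' * d')⁻¹ * (u * d) := by rw [hb]; group
  have hCut : ∀ i l : Fin n, l < i → entry p n C i l = 0 := by
    rw [hCeq]
    exact mul_upper (binv_upper hbu') hbu
  have hCdiag : ∀ i, ‖entry p n C i i‖ = 1 := diag_norm_one C hCint hCinvint hCut
  -- Step A : σ = τ
  have hle : ∀ i, (τ⁻¹ i : Fin n) ≤ σ⁻¹ i := by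
    intro i
    by_contra hlt
    push_neg at hlt
    have h1 := hk.2.2 (τ⁻¹ i) (σ⁻¹ i) hlt
    rw [← hCk] at h1
    rw [hCdiag i] at h1
    exact lt_irrefl _ h1
  have hστ : σ = τ := by
    have hsum : ∑ i : Fin n, ((σ⁻¹ i : Fin n) : ℕ) = ∑ i : Fin n, ((τ⁻¹ i : Fin n) : ℕ) := by
      rw [Equiv.sum_comp σ⁻¹ (fun i : Fin n => (i : ℕ)),
        Equiv.sum_comp τ⁻¹ (fun i : Fin n => (i : ℕ))]
    have hpt : ∀ i, (τ⁻¹ i : Fin n) = σ⁻¹ i := by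
      by_contra hcon
      push_neg at hcon
      obtain ⟨i, hi⟩ := hcon
      have hstrict : (↑(τ⁻¹ i) : ℕ) < ↑(σ⁻¹ i) :=
        lt_of_le_of_ne (by exact_mod_cast hle i) (by
          intro hc; exact hi (Fin.ext hc))
      have : ∑ i : Fin n, ((τ⁻¹ i : Fin n) : ℕ) < ∑ i : Fin n, ((σ⁻¹ i : Fin n) : ℕ) :=
        Finset.sum_lt_sum (fun i _ => by exact_mod_cast hle i) ⟨i, Finset.mem_univ i, hstrict⟩
      omega
    have hinv : σ⁻¹ = τ⁻¹ := Equiv.ext fun i => (hpt i).symm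
    exact inv_injective hinv.symm |>.symm
  subst hστ
  -- Step B : diagonal comparison
  have hCdne : ∀ i, entry p n C i i ≠ 0 := by
    intro i h0
    have := hCdiag i
    rw [h0, norm_zero] at this
    exact zero_ne_one this
  have hdne : ∀ i, entry p n d i i ≠ 0 := T_diag_ne_zero hd
  have hdne' : ∀ i, entry p n d' i i ≠ 0 := T_diag_ne_zero hd'
  have hentry : ∀ i l, entry p n (u * d) i l = entry p n (u' * d' * C) i l := by
    intro i l
    rw [hb]
  have hdd : ∀ i, entry p n d i i = entry p n d' i i * entry p n C i i := by
    intro i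
    have h1 : entry p n (u * d) i i = entry p n d i i := by
      rw [entry_mul_T hd, hu.1, one_mul]
    have h2 : entry p n (u' * d' * C) i i = entry p n d' i i * entry p n C i i := by
      rw [entry_mul]
      rw [Finset.sum_eq_single i]
      · rw [entry_mul_T hd', hu'.1, one_mul]
      · intro b _ hb2
        rcases lt_or_gt_of_ne hb2 with hlt | hgt
        · rw [hbu' i b hlt, zero_mul]
        · rw [hCut b i hgt, mul_zero]
      · simp
    rw [← h1, hentry, h2]
  have hval : ∀ i, (entry p n d i i).valuation = (entry p n d' i i).valuation := by
    intro i
    rw [hdd i, Padic.valuation_mul (hdne' i) (hCdne i),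
      val_zero_of_norm_one (hCdiag i), add_zero]
  refine ⟨rfl, hval, ?_⟩
  -- Step C : psi values agree
  intro ψ₀ hψadd hψtriv hdom
  unfold psiN
  apply Finset.prod_congr rfl
  intro i _
  by_cases h : (i : ℕ) + 1 < n
  · rw [dif_pos h, dif_pos h]
    set i' : Fin n := finSucc n i h with hi'
    have hine : i ≠ i' := by rw [hi']; exact finSucc_ne n i h
    have hii' : (i : ℕ) < (i' : ℕ) := by rw [hi']; simp [finSucc]
    have hival : (i' : ℕ) = (i : ℕ) + 1 := by rw [hi']; simp [finSucc]
    have e1 : entry p n (u * d) i i' = entry p n u i i' * entry p n d i' i' :=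
      entry_mul_T hd i i'
    have e2 : entry p n (u' * d' * C) i i'
        = entry p n d' i i * entry p n C i i'
          + entry p n u' i i' * entry p n d' i' i' * entry p n C i' i' := by
      rw [entry_mul]
      rw [← Finset.sum_subset (Finset.subset_univ ({i, i'} : Finset (Fin n)))
        (fun x _ hx => ?_)]
      · rw [Finset.sum_insert (by simpa using hine), Finset.sum_singleton]
        rw [entry_mul_T hd', hu'.1, one_mul, entry_mul_T hd']
      · simp only [Finset.mem_insert, Finset.mem_singleton, not_or] at hx
        obtain ⟨hx1, hx2⟩ := hx
        rcases lt_or_gt_of_ne hx1 with hlt | hgt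
        · rw [hbu' i x hlt, zero_mul]
        · have hx3 : i' < x := by
            have h1 : (i : ℕ) < (x : ℕ) := hgt
            have h2 : (x : ℕ) ≠ (i' : ℕ) := fun hc => hx2 (Fin.ext hc)
            exact Fin.lt_def.mpr (by omega)
          rw [hCut x i' hx3, mul_zero]
    have hAB : entry p n u i i' * entry p n d i' i'
        = entry p n d' i i * entry p n C i i'
          + entry p n u' i i' * entry p n d' i' i' * entry p n C i' i' := by
      rw [← e1, hentry, e2]
    have hdd' := hdd i'
    have hne0 : entry p n d i' i' ≠ 0 := hdne i'
    have hsolve : entry p n u i i' = entry p n u' i i'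
        + entry p n d' i i * entry p n C i i' / entry p n d i' i' := by
      field_simp
      linear_combination hAB - entry p n u' i i' * hdd'
    have hnorm : ‖entry p n d' i i * entry p n C i i' / entry p n d i' i'‖ ≤ 1 := by
      rw [norm_div, norm_mul]
      have hb0 : 0 < ‖entry p n d i' i'‖ := norm_pos_iff.mpr hne0
      rw [div_le_one hb0]
      have hnormdd : ‖entry p n d' i i‖ = ‖entry p n d i i‖ := by
        rw [hdd i, norm_mul, hCdiag i, mul_one]
      rw [hnormdd]
      have hneq : σ⁻¹ i ≠ σ⁻¹ i' := fun hc => hine (σ⁻¹.injective hc)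
      rcases lt_or_gt_of_ne hneq with hlt | hgt
      · have h1 := (hdom i h).1 hlt
        rw [← hi'] at h1
        have h2 : ‖entry p n d i i‖ ≤ ‖entry p n d i' i'‖ :=
          norm_le_of_val_le (hdne i) (hdne i') (by omega)
        calc ‖entry p n d i i‖ * ‖entry p n C i i'‖ ≤ ‖entry p n d i' i'‖ * 1 :=
              mul_le_mul h2 (hCint i i') (norm_nonneg _) (norm_nonneg _)
          _ = _ := mul_one _
      · have h1 := (hdom i h).2 hgt
        rw [← hi'] at h1
        have h2 : ‖entry p n d i i‖ ≤ (p : ℝ) * ‖entry p n d i' i'‖ :=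
          norm_le_p_mul_of_val (hdne i) (hdne i') (by omega)
        have h3 : ‖entry p n C i i'‖ ≤ (p : ℝ)⁻¹ := by
          rw [← norm_lt_one_iff_le_inv, hCk]
          exact hk.2.2 (σ⁻¹ i) (σ⁻¹ i') hgt
        calc ‖entry p n d i i‖ * ‖entry p n C i i'‖
            ≤ ((p : ℝ) * ‖entry p n d i' i'‖) * (p : ℝ)⁻¹ :=
              mul_le_mul h2 h3 (norm_nonneg _) (by positivity)
          _ = ‖entry p n d i' i'‖ := by
              rw [mul_comm ((p : ℝ)) _, mul_assoc,
                mul_inv_cancel₀ (ne_of_gt (hp_pos (p := p))), mul_one]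
    rw [hsolve, hψadd, hψtriv _ hnorm, mul_one]
  · rw [dif_neg h, dif_neg h]
end SW
namespace SW
variable {p n : ℕ} [Fact p.Prime]
local notation "GLn" => GL (Fin n) ℚ_[p]

/-- Row-perturbation unit `1 + q`, `q a b = if a = c then w b else 0`, with `w c = 0`. -/
noncomputable def pertRow (c : Fin n) (w : Fin n → ℚ_[p]) (hw : w c = 0) : GLn :=
  let q : Matrix (Fin n) (Fin n) ℚ_[p] := Matrix.of fun a b => if a = c then w b else 0
  have hq : q * q = 0 := by
    ext a b
    simp only [Matrix.mul_apply, Matrix.zero_apply]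
    apply Finset.sum_eq_zero
    intro k _
    by_cases hk : k = c
    · subst hk
      by_cases hac : a = k <;> simp [q, hac, hw]
    · simp [q, hk]
  ⟨1 + q, 1 - q,
    by have h : (1 + q) * (1 - q) = 1 - q * q := by noncomm_ring
       rw [h, hq, sub_zero],
    by have h : (1 - q) * (1 + q) = 1 - q * q := by noncomm_ring
       rw [h, hq, sub_zero]⟩

/-- Column-perturbation unit `1 + q`, `q a b = if b = r then v a else 0`, with `v r = 0`. -/
noncomputable def pertCol (r : Fin n) (v : Fin n → ℚ_[p]) (hv : v r = 0) : GLn :=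
  let q : Matrix (Fin n) (Fin n) ℚ_[p] := Matrix.of fun a b => if b = r then v a else 0
  have hq : q * q = 0 := by
    ext a b
    simp only [Matrix.mul_apply, Matrix.zero_apply]
    apply Finset.sum_eq_zero
    intro k _
    by_cases hk : k = r
    · subst hk
      by_cases hbk : b = k <;> simp [q, hbk, hv]
    · simp [q, hk]
  ⟨1 + q, 1 - q,
    by have h : (1 + q) * (1 - q) = 1 - q * q := by noncomm_ring
       rw [h, hq, sub_zero],
    by have h : (1 - q) * (1 + q) = 1 - q * q := by noncomm_ring
       rw [h, hq, sub_zero]⟩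

lemma entry_pertRow (c : Fin n) (w : Fin n → ℚ_[p]) (hw : w c = 0) (a b : Fin n) :
    entry p n (pertRow c w hw) a b
      = (if a = b then 1 else 0) + (if a = c then w b else 0) := by
  show ((1 : Matrix (Fin n) (Fin n) ℚ_[p]) + _) a b = _
  rw [Matrix.add_apply, Matrix.one_apply]
  rfl

lemma entry_pertRow_inv (c : Fin n) (w : Fin n → ℚ_[p]) (hw : w c = 0) (a b : Fin n) :
    entry p n (pertRow c w hw)⁻¹ a b
      = (if a = b then 1 else 0) - (if a = c then w b else 0) := by
  show ((1 : Matrix (Fin n) (Fin n) ℚ_[p]) - _) a b = _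
  rw [Matrix.sub_apply, Matrix.one_apply]
  rfl

lemma entry_pertCol (r : Fin n) (v : Fin n → ℚ_[p]) (hv : v r = 0) (a b : Fin n) :
    entry p n (pertCol r v hv) a b
      = (if a = b then 1 else 0) + (if b = r then v a else 0) := by
  show ((1 : Matrix (Fin n) (Fin n) ℚ_[p]) + _) a b = _
  rw [Matrix.add_apply, Matrix.one_apply]
  rfl

lemma entry_mul_pertRow (g : GLn) (c : Fin n) (w : Fin n → ℚ_[p]) (hw : w c = 0) (a b : Fin n) :
    entry p n (g * pertRow c w hw) a b = entry p n g a b + entry p n g a c * w b := by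
  rw [entry_mul]
  have hsplit : ∀ k : Fin n, entry p n g a k * entry p n (pertRow c w hw) k b
      = entry p n g a k * (if k = b then 1 else 0) + entry p n g a k * (if k = c then w b else 0) := by
    intro k
    rw [entry_pertRow, mul_add]
  rw [Finset.sum_congr rfl (fun k _ => hsplit k), Finset.sum_add_distrib]
  congr 1
  · rw [Finset.sum_eq_single b]
    · simp
    · intro k _ hk; simp [hk]
    · simp
  · rw [Finset.sum_eq_single c]
    · simp
    · intro k _ hk; simp [hk]
    · simp

lemma entry_pertCol_mul (g : GLn) (r : Fin n) (v : Fin n → ℚ_[p]) (hv : v r = 0) (a b : Fin n) :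
    entry p n (pertCol r v hv * g) a b = entry p n g a b + v a * entry p n g r b := by
  rw [entry_mul]
  have hsplit : ∀ k : Fin n, entry p n (pertCol r v hv) a k * entry p n g k b
      = (if a = k then 1 else 0) * entry p n g k b + (if k = r then v a else 0) * entry p n g k b := by
    intro k
    rw [entry_pertCol, add_mul]
  rw [Finset.sum_congr rfl (fun k _ => hsplit k), Finset.sum_add_distrib]
  congr 1
  · rw [Finset.sum_eq_single a]
    · simp
    · intro k _ hk; simp [Ne.symm hk]
    · simp
  · rw [Finset.sum_eq_single r]
    · simp
    · intro k _ hk; simp [hk]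
    · simp

lemma pertRow_mem_J (c : Fin n) (w : Fin n → ℚ_[p]) (hw : w c = 0)
    (h1 : ∀ b, ‖w b‖ ≤ 1) (h2 : ∀ b, b < c → ‖w b‖ < 1) :
    pertRow c w hw ∈ Jset p n := by
  have hb1 : ∀ a b : Fin n,
      ‖(if a = b then (1:ℚ_[p]) else 0) + (if a = c then w b else 0)‖ ≤ 1 := by
    intro a b
    apply le_trans (Padic.nonarchimedean _ _)
    apply max_le
    · split <;> simp
    · split
      · exact h1 b
      · simp
  have hb2 : ∀ a b : Fin n,
      ‖(if a = b then (1:ℚ_[p]) else 0) - (if a = c then w b else 0)‖ ≤ 1 := by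
    intro a b
    rw [sub_eq_add_neg]
    apply le_trans (Padic.nonarchimedean _ _)
    apply max_le
    · split <;> simp
    · rw [norm_neg]
      split
      · exact h1 b
      · simp
  refine ⟨fun a b => ?_, fun a b => ?_, fun a b hba => ?_⟩
  · rw [entry_pertRow]; exact hb1 a b
  · rw [entry_pertRow_inv]; exact hb2 a b
  · rw [entry_pertRow]
    rw [if_neg (by intro hc; subst hc; exact lt_irrefl _ hba)]
    rw [zero_add]
    by_cases hac : a = c
    · rw [if_pos hac]
      exact h2 b (hac ▸ hba)
    · rw [if_neg hac]; simp

lemma pertCol_mem_N (r : Fin n) (v : Fin n → ℚ_[p]) (hv : v r = 0)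
    (h : ∀ a : Fin n, r < a → v a = 0) :
    pertCol r v hv ∈ Nset p n := by
  constructor
  · intro i
    rw [entry_pertCol, if_pos rfl]
    by_cases hir : i = r
    · subst hir; rw [if_pos rfl, hv, add_zero]
    · rw [if_neg hir, add_zero]
  · intro i j hji
    rw [entry_pertCol, if_neg (by intro hc; subst hc; exact lt_irrefl _ hji)]
    rw [zero_add]
    by_cases hjr : j = r
    · subst hjr
      rw [if_pos rfl, h i hji]
    · rw [if_neg hjr]

/-- Invariant for the elimination: rows with index `≥ r` are "monomialized". -/
def InvP (g : GLn) (r : ℕ) (ρ : Fin n → Fin n) : Prop :=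
  (∀ i : Fin n, r ≤ (i : ℕ) → ∀ c, c ≠ ρ i → entry p n g i c = 0) ∧
  (∀ i : Fin n, r ≤ (i : ℕ) → ∀ i', i' ≠ i → entry p n g i' (ρ i) = 0) ∧
  (∀ i i' : Fin n, r ≤ (i : ℕ) → r ≤ ((i' : Fin n) : ℕ) → ρ i = ρ i' → i = i')

end SW
namespace SW
variable {p n : ℕ} [Fact p.Prime]
local notation "GLn" => GL (Fin n) ℚ_[p]

lemma step (g : GLn) (r : ℕ) (hr : r < n) (ρ : Fin n → Fin n) (hInv : InvP g (r + 1) ρ) :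
    ∃ u ∈ Nset p n, ∃ j ∈ Jset p n, ∃ ρ', InvP (u * g * j) r ρ' := by
  classical
  set r₀ : Fin n := ⟨r, hr⟩ with hr₀
  -- pivot column
  have hne : (Finset.univ : Finset (Fin n)).Nonempty := ⟨r₀, Finset.mem_univ _⟩
  obtain ⟨b0, _, hb0⟩ := Finset.exists_max_image Finset.univ
    (fun c => ‖entry p n g r₀ c‖) hne
  set S : Finset (Fin n) :=
    Finset.univ.filter (fun c => ∀ c', ‖entry p n g r₀ c'‖ ≤ ‖entry p n g r₀ c‖) with hS
  have hSne : S.Nonempty := ⟨b0, by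
    rw [hS, Finset.mem_filter]
    exact ⟨Finset.mem_univ _, fun c' => hb0 c' (Finset.mem_univ _)⟩⟩
  set cs : Fin n := S.min' hSne with hcs
  have hmax : ∀ c', ‖entry p n g r₀ c'‖ ≤ ‖entry p n g r₀ cs‖ :=
    (Finset.mem_filter.mp (S.min'_mem hSne)).2
  have hstrict : ∀ c, c < cs → ‖entry p n g r₀ c‖ < ‖entry p n g r₀ cs‖ := by
    intro c hc
    have hcnot : c ∉ S := by
      intro hcS
      exact absurd (S.min'_le c hcS) (not_le.mpr hc)
    rw [hS, Finset.mem_filter] at hcnot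
    push_neg at hcnot
    obtain ⟨c', hc'⟩ := hcnot (Finset.mem_univ _)
    exact lt_of_lt_of_le hc' (hmax c')
  have hpiv : entry p n g r₀ cs ≠ 0 := by
    obtain ⟨c0, hc0⟩ := row_ne_zero g r₀
    have := lt_of_lt_of_le (norm_pos_iff.mpr hc0) (hmax c0)
    exact norm_pos_iff.mp this
  have hproc_ne : ∀ i : Fin n, r + 1 ≤ (i : ℕ) → r₀ ≠ i := by
    intro i hi hc
    rw [hc] at hr₀
    have : (i : ℕ) = r := by rw [hr₀]
    omega
  have hcnotρ : ∀ i : Fin n, r + 1 ≤ (i : ℕ) → cs ≠ ρ i := by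
    intro i hi hc
    have h0 := hInv.2.1 i hi r₀ (hproc_ne i hi)
    rw [← hc] at h0
    exact hpiv h0
  -- the column operations
  set w : Fin n → ℚ_[p] :=
    fun b => if b = cs then 0 else -(entry p n g r₀ b / entry p n g r₀ cs) with hwdef
  have hw : w cs = 0 := by rw [hwdef]; simp
  set jE : GLn := pertRow cs w hw with hjEdef
  have hjE : jE ∈ Jset p n := by
    apply pertRow_mem_J
    · intro b
      rw [hwdef]
      by_cases hb : b = cs
      · simp [hb]
      · simp only [hb, if_false, norm_neg, norm_div]
        rw [div_le_one (norm_pos_iff.mpr hpiv)]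
        exact hmax b
    · intro b hb
      have hbne : b ≠ cs := ne_of_lt hb
      rw [hwdef]
      simp only [hbne, if_false, norm_neg, norm_div]
      rw [div_lt_one (norm_pos_iff.mpr hpiv)]
      exact hstrict b hb
  have hg1 : ∀ a b, entry p n (g * jE) a b
      = entry p n g a b + entry p n g a cs * w b := fun a b => entry_mul_pertRow g cs w hw a b
  have hg1row : ∀ b, b ≠ cs → entry p n (g * jE) r₀ b = 0 := by
    intro b hb
    rw [hg1, hwdef]
    simp only [hb, if_false]
    field_simp
    ring
  have hg1piv : entry p n (g * jE) r₀ cs = entry p n g r₀ cs := by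
    rw [hg1, hw, mul_zero, add_zero]
  have hg1proc : ∀ i : Fin n, r + 1 ≤ (i : ℕ) → ∀ b, entry p n (g * jE) i b = entry p n g i b := by
    intro i hi b
    rw [hg1, hInv.1 i hi cs (hcnotρ i hi), zero_mul, add_zero]
  -- the row operations
  set v : Fin n → ℚ_[p] :=
    fun a => if (a : ℕ) < r then -(entry p n (g * jE) a cs / entry p n (g * jE) r₀ cs) else 0
    with hvdef
  have hv : v r₀ = 0 := by rw [hvdef]; simp [hr₀]
  set U : GLn := pertCol r₀ v hv with hUdef
  have hU : U ∈ Nset p n := by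
    apply pertCol_mem_N
    intro a ha
    rw [hvdef]
    have h1 : (r₀ : ℕ) < (a : ℕ) := ha
    have h2 : (r₀ : ℕ) = r := rfl
    have : ¬ ((a : ℕ) < r) := by omega
    simp [this]
  have hg2 : ∀ a b, entry p n (U * (g * jE)) a b
      = entry p n (g * jE) a b + v a * entry p n (g * jE) r₀ b :=
    fun a b => entry_pertCol_mul (g * jE) r₀ v hv a b
  have hg2assoc : U * g * jE = U * (g * jE) := mul_assoc U g jE
  -- properties of the result
  have hg2rowr₀ : ∀ b, b ≠ cs → entry p n (U * (g * jE)) r₀ b = 0 := by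
    intro b hb
    rw [hg2, hv, zero_mul, add_zero]
    exact hg1row b hb
  have hg2proc_row : ∀ i : Fin n, r + 1 ≤ (i : ℕ) → ∀ b,
      entry p n (U * (g * jE)) i b = entry p n g i b := by
    intro i hi b
    have hvi : v i = 0 := by
      rw [hvdef]
      have : ¬ ((i : ℕ) < r) := by omega
      simp [this]
    rw [hg2, hvi, zero_mul, add_zero]
    exact hg1proc i hi b
  have hg2colcs : ∀ a : Fin n, a ≠ r₀ → entry p n (U * (g * jE)) a cs = 0 := by
    intro a ha
    by_cases hav : (a : ℕ) < r
    · rw [hg2, hvdef]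
      simp only [hav, if_true]
      rw [hg1piv]
      field_simp
      ring
    · have hav' : r + 1 ≤ (a : ℕ) := by
        have : (a : ℕ) ≠ r := by
          intro hc
          exact ha (Fin.ext hc)
        omega
      rw [hg2proc_row a hav' cs]
      exact hInv.1 a hav' cs (hcnotρ a hav')
  have hg2proc_col : ∀ i : Fin n, r + 1 ≤ (i : ℕ) → ∀ a, a ≠ i →
      entry p n (U * (g * jE)) a (ρ i) = 0 := by
    intro i hi a ha
    have hρne : ρ i ≠ cs := fun hc => hcnotρ i hi hc.symm
    have hwρ : w (ρ i) = 0 := by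
      rw [hwdef]
      simp only [hρne, if_false]
      rw [hInv.2.1 i hi r₀ (hproc_ne i hi)]
      simp
    have hg1ρ : ∀ a', entry p n (g * jE) a' (ρ i) = entry p n g a' (ρ i) := by
      intro a'
      rw [hg1, hwρ, mul_zero, add_zero]
    rw [hg2, hg1ρ a, hg1ρ r₀, hInv.2.1 i hi r₀ (hproc_ne i hi), mul_zero, add_zero]
    exact hInv.2.1 i hi a ha
  -- assemble the invariant at level `r`
  refine ⟨U, hU, jE, hjE, Function.update ρ r₀ cs, ?_, ?_, ?_⟩
  · intro i hi c hc
    rw [hg2assoc]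
    by_cases hir : i = r₀
    · subst hir
      rw [Function.update_self] at hc
      exact hg2rowr₀ c hc
    · have hi' : r + 1 ≤ (i : ℕ) := by
        have : (i : ℕ) ≠ r := fun hc2 => hir (Fin.ext hc2)
        omega
      rw [Function.update_of_ne hir] at hc
      rw [hg2proc_row i hi' c]
      exact hInv.1 i hi' c hc
  · intro i hi i' hi'
    rw [hg2assoc]
    by_cases hir : i = r₀
    · subst hir
      rw [Function.update_self]
      exact hg2colcs i' hi'
    · have hi2 : r + 1 ≤ (i : ℕ) := by
        have : (i : ℕ) ≠ r := fun hc2 => hir (Fin.ext hc2)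
        omega
      rw [Function.update_of_ne hir]
      exact hg2proc_col i hi2 i' hi'
  · intro i i' hi hi' hρ
    by_cases hir : i = r₀ <;> by_cases hir' : i' = r₀
    · rw [hir, hir']
    · exfalso
      subst hir
      have hi2 : r + 1 ≤ (i' : ℕ) := by
        have : (i' : ℕ) ≠ r := fun hc2 => hir' (Fin.ext hc2)
        omega
      rw [Function.update_self, Function.update_of_ne hir'] at hρ
      exact hcnotρ i' hi2 hρ
    · exfalso
      subst hir'
      have hi2 : r + 1 ≤ (i : ℕ) := by
        have : (i : ℕ) ≠ r := fun hc2 => hir (Fin.ext hc2)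
        omega
      rw [Function.update_self, Function.update_of_ne hir] at hρ
      exact hcnotρ i hi2 hρ.symm
    · have hi2 : r + 1 ≤ (i : ℕ) := by
        have : (i : ℕ) ≠ r := fun hc2 => hir (Fin.ext hc2)
        omega
      have hi2' : r + 1 ≤ (i' : ℕ) := by
        have : (i' : ℕ) ≠ r := fun hc2 => hir' (Fin.ext hc2)
        omega
      rw [Function.update_of_ne hir, Function.update_of_ne hir'] at hρ
      exact hInv.2.2 i i' hi2 hi2' hρ
end SW
namespace SW
variable {p n : ℕ} [Fact p.Prime]
local notation "GLn" => GL (Fin n) ℚ_[p]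

lemma chain : ∀ (r : ℕ) (g : GLn) (ρ : Fin n → Fin n), InvP g r ρ →
    ∃ u ∈ Nset p n, ∃ j ∈ Jset p n, ∃ ρ', InvP (u * g * j) 0 ρ' := by
  intro r
  induction r with
  | zero =>
    intro g ρ h
    exact ⟨1, one_mem_N, 1, one_mem_J, ρ, by rwa [one_mul, mul_one]⟩
  | succ r ih =>
    intro g ρ h
    by_cases hr : r < n
    · obtain ⟨u1, hu1, j1, hj1, ρ1, h1⟩ := step g r hr ρ h
      obtain ⟨u2, hu2, j2, hj2, ρ2, h2⟩ := ih (u1 * g * j1) ρ1 h1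
      refine ⟨u2 * u1, mul_mem_N hu2 hu1, j1 * j2, mul_mem_J hj1 hj2, ρ2, ?_⟩
      have hassoc : u2 * u1 * g * (j1 * j2) = u2 * (u1 * g * j1) * j2 := by group
      rwa [hassoc]
    · apply ih g ρ
      have hvac : ∀ i : Fin n, ¬ (r ≤ (i : ℕ)) := by
        intro i hi
        have := i.isLt
        omega
      exact ⟨fun i hi => absurd hi (hvac i), fun i hi => absurd hi (hvac i),
        fun i i' hi => absurd hi (hvac i)⟩

lemma decomp (g : GLn) :
    ∃ u ∈ Nset p n, ∃ d ∈ Tset p n, ∃ σ : Equiv.Perm (Fin n), ∃ j ∈ Jset p n,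
      g = u * d * permGL p n σ * j := by
  have hstart : InvP g n id := by
    have hvac : ∀ i : Fin n, ¬ (n ≤ (i : ℕ)) := by
      intro i hi
      have := i.isLt
      omega
    exact ⟨fun i hi => absurd hi (hvac i), fun i hi => absurd hi (hvac i),
      fun i i' hi => absurd hi (hvac i)⟩
  obtain ⟨u, hu, j, hj, ρ, hInv⟩ := chain n g id hstart
  have hinj : Function.Injective ρ := fun a b hab =>
    hInv.2.2 a b (Nat.zero_le _) (Nat.zero_le _) hab
  have hbij : Function.Bijective ρ := Finite.injective_iff_bijective.mp hinj
  let e : Equiv.Perm (Fin n) := Equiv.ofBijective ρ hbij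
  let σ : Equiv.Perm (Fin n) := e.symm
  let d : GLn := (u * g * j) * (permGL p n σ)⁻¹
  have hσinv : ∀ b, (σ⁻¹ : Equiv.Perm (Fin n)) b = ρ b := fun b => rfl
  have hd : d ∈ Tset p n := by
    intro a b hab
    have h1 : entry p n d a b = entry p n (u * g * j) a (σ⁻¹ b) := by
      show entry p n ((u * g * j) * (permGL p n σ)⁻¹) a b = _
      rw [permGL_inv, entry_mul_permGL]
    rw [h1, hσinv b]
    apply hInv.1 a (Nat.zero_le _)
    intro hc
    exact hab (hinj hc).symm
  refine ⟨u⁻¹, inv_mem_N hu, d, hd, σ, j⁻¹, inv_mem_J hj, ?_⟩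
  show g = u⁻¹ * ((u * g * j) * (permGL p n σ)⁻¹) * permGL p n σ * j⁻¹
  group

end SW
namespace SW
variable {p n : ℕ} [Fact p.Prime]
local notation "GLn" => GL (Fin n) ℚ_[p]

open Classical in
/-- The candidate value of the Whittaker function on `u d w_σ J`. -/
noncomputable def Fval (ψ₀ : ℚ_[p] → ℂ) (z : Fin n → ℂˣ) (u d : GLn)
    (σ : Equiv.Perm (Fin n)) : ℂ :=
  if IsDom p n σ d then
    psiN p n ψ₀ u * chiDelta p n z d * (-(p : ℂ)) ^ (-(len n σ : ℤ))
  else 0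

lemma chiDelta_congr (z : Fin n → ℂˣ) {d d' : GLn}
    (h : ∀ i, (entry p n d i i).valuation = (entry p n d' i i).valuation) :
    chiDelta p n z d = chiDelta p n z d' := by
  unfold chiDelta
  exact Finset.prod_congr rfl fun i _ => by rw [h i]

lemma IsDom_congr {σ : Equiv.Perm (Fin n)} {d d' : GLn}
    (h : ∀ i, (entry p n d i i).valuation = (entry p n d' i i).valuation) :
    IsDom p n σ d ↔ IsDom p n σ d' := by
  unfold IsDom
  constructor <;> intro hh i hi <;> obtain ⟨h1, h2⟩ := hh i hi <;> constructor <;> intro hlt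
  · have := h1 hlt; rwa [h i, h (finSucc n i hi)] at this
  · have := h2 hlt; rwa [h i, h (finSucc n i hi)] at this
  · have := h1 hlt; rwa [← h i, ← h (finSucc n i hi)] at this
  · have := h2 hlt; rwa [← h i, ← h (finSucc n i hi)] at this

lemma valEq {u u' d d' j j' : GLn} {σ τ : Equiv.Perm (Fin n)}
    (hu : u ∈ Nset p n) (hu' : u' ∈ Nset p n) (hd : d ∈ Tset p n) (hd' : d' ∈ Tset p n)
    (hj : j ∈ Jset p n) (hj' : j' ∈ Jset p n)
    (heq : u * d * permGL p n σ * j = u' * d' * permGL p n τ * j')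
    (ψ₀ : ℚ_[p] → ℂ) (hψadd : ∀ x y, ψ₀ (x + y) = ψ₀ x * ψ₀ y)
    (hψtriv : ∀ x, ‖x‖ ≤ 1 → ψ₀ x = 1) (z : Fin n → ℂˣ) :
    Fval ψ₀ z u d σ = Fval ψ₀ z u' d' τ := by
  obtain ⟨hστ, hval, hpsi⟩ := key hu hu' hd hd' hj hj' heq
  subst hστ
  by_cases hdom : IsDom p n σ d
  · have hdom' : IsDom p n σ d' := (IsDom_congr hval).mp hdom
    rw [Fval, if_pos hdom, Fval, if_pos hdom', hpsi ψ₀ hψadd hψtriv hdom,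
      chiDelta_congr z hval]
  · have hdom' : ¬ IsDom p n σ d' := fun hc => hdom ((IsDom_congr hval).mpr hc)
    rw [Fval, if_neg hdom, Fval, if_neg hdom']

end SW
/-- Existence and uniqueness of the Steinberg Iwahori-spherical Whittaker function:
there is a unique `W : G → ℂ` with `W(u·d·w_σ·j) = ψ(u)·(χδ_B)(d)·(-p)^{-ℓ(σ)}` whenever
`λ(d)` is `σ`-dominant and `W(u·d·w_σ·j) = 0` otherwise; in particular the formula is
independent of the chosen Bruhat–Iwahori factorization. -/
theorem steinberg_whittaker_exists_unique (hn : 2 ≤ n)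
    (ψ₀ : ℚ_[p] → ℂ)
    (hψadd : ∀ x y : ℚ_[p], ψ₀ (x + y) = ψ₀ x * ψ₀ y)
    (hψtriv : ∀ x : ℚ_[p], ‖x‖ ≤ 1 → ψ₀ x = 1)
    (hψnontriv : ∃ x : ℚ_[p], ‖x‖ ≤ (p : ℝ) ∧ ψ₀ x ≠ 1)
    (z : Fin n → ℂˣ) (hz : ∏ i : Fin n, z i = 1)
    : ∃! W : GL (Fin n) ℚ_[p] → ℂ,
      ∀ u ∈ Nset p n, ∀ d ∈ Tset p n, ∀ σ : Equiv.Perm (Fin n), ∀ j ∈ Jset p n,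
        (IsDom p n σ d →
          W (u * d * permGL p n σ * j)
            = psiN p n ψ₀ u * chiDelta p n z d * (-(p : ℂ)) ^ (-(len n σ : ℤ))) ∧
        (¬ IsDom p n σ d → W (u * d * permGL p n σ * j) = 0) := by
  classical
  choose fu hfu fd hfd fσ fj hfj hfact using
    fun g : GL (Fin n) ℚ_[p] => SW.decomp (p := p) (n := n) g
  refine ⟨fun g => SW.Fval ψ₀ z (fu g) (fd g) (fσ g), ?_, ?_⟩
  · intro u hu d hd σ j hj
    set g := u * d * permGL p n σ * j with hg
    have hEq : fu g * fd g * permGL p n (fσ g) * fj g = u * d * permGL p n σ * j := by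
      rw [← hg]
      exact (hfact g).symm
    have hvv : SW.Fval ψ₀ z (fu g) (fd g) (fσ g) = SW.Fval ψ₀ z u d σ :=
      SW.valEq (hfu g) hu (hfd g) hd (hfj g) hj hEq ψ₀ hψadd hψtriv z
    constructor
    · intro hdom
      show SW.Fval ψ₀ z (fu g) (fd g) (fσ g) = _
      rw [hvv, SW.Fval, if_pos hdom]
    · intro hdom
      show SW.Fval ψ₀ z (fu g) (fd g) (fσ g) = 0
      rw [hvv, SW.Fval, if_neg hdom]
  · intro W' hW'
    funext g
    obtain ⟨h1, h2⟩ := hW' (fu g) (hfu g) (fd g) (hfd g) (fσ g) (fj g) (hfj g)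
    by_cases hdom : IsDom p n (fσ g) (fd g)
    · rw [congrArg W' (hfact g), h1 hdom]
      show _ = SW.Fval ψ₀ z (fu g) (fd g) (fσ g)
      rw [SW.Fval, if_pos hdom]
    · rw [congrArg W' (hfact g), h2 hdom]
      show _ = SW.Fval ψ₀ z (fu g) (fd g) (fσ g)
      rw [SW.Fval, if_neg hdom]
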